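/- Let (S, R, E, F) be a solution of Model (2) on [0,∞) with nonnegative initial values and μ > 0, and suppose 0 ≤ F(t) ≤ M for all t ≥ 0, for some constant M ≥ 0. Then for all t ≥ 0, E(t) ≤ p·r·M/μ + (E(0) − p·r·M/μ)·exp(−μ·t); in particular limsup_{t→∞} E(t) ≤ p·r·M/μ and E is bounded above on [0,∞). -/

import Mathlib

open Filter

/-- Grönwall-type bound for the estrogen concentration in Model (2) (μ > 0):
if 0 ≤ F(t) ≤ M for all t ≥ 0, then
E(t) ≤ p·r·M/μ + (E(0) − p·r·M/μ)·exp(−μ·t) for all t ≥ 0; in particular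
limsup_{t→∞} E(t) ≤ p·r·M/μ and E is bounded above on [0,∞). -/
theorem model2_estrogen_bounded
    (k1 k2 k3 m1 m2 r μ α c η a1 a2 a3 p : ℝ) (l : ℕ)
    (hk1 : 0 ≤ k1) (hk2 : 0 ≤ k2) (hk3 : 0 ≤ k3) (hm1 : 0 ≤ m1) (hm2 : 0 ≤ m2)
    (hr : 0 ≤ r) (hμ : 0 < μ) (hα : 0 ≤ α) (hc : 0 ≤ c) (hη : 0 ≤ η)
    (ha1 : 0 < a1) (ha2 : 0 < a2) (ha3 : 0 < a3) (hp0 : 0 < p) (hp1 : p ≤ 1)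
    (hl : 1 ≤ l)
    (S R E F : ℝ → ℝ)
    (hS : Differentiable ℝ S) (hR : Differentiable ℝ R)
    (hE : Differentiable ℝ E) (hF : Differentiable ℝ F)
    (hS' : ∀ t ≥ (0:ℝ), deriv S t =
      (k1 * E t / (a1 + E t)) * S t * (1 - m1 * (S t + η * R t))
        - (c * a2 ^ l / (a2 ^ l + E t ^ l)) * S t
        - (c * a3 ^ l / (a3 ^ l + E t ^ l)) * S t)
    (hR' : ∀ t ≥ (0:ℝ), deriv R t =
      k3 * R t * (1 - m1 * (S t + η * R t))
        + (c * a3 ^ l / (a3 ^ l + E t ^ l)) * S t)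
    (hE' : ∀ t ≥ (0:ℝ), deriv E t = p * r * F t - μ * E t)
    (hF' : ∀ t ≥ (0:ℝ), deriv F t = k2 * F t * (1 - m2 * F t) - α * (S t + R t) * F t)
    (hS0 : 0 ≤ S 0) (hR0 : 0 ≤ R 0) (hE0 : 0 ≤ E 0) (hF0 : 0 ≤ F 0)
    (M : ℝ) (hM : 0 ≤ M)
    (hFbdd : ∀ t ≥ (0:ℝ), 0 ≤ F t ∧ F t ≤ M) :
    (∀ t ≥ (0:ℝ),
        E t ≤ p * r * M / μ + (E 0 - p * r * M / μ) * Real.exp (-μ * t)) ∧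
      limsup E atTop ≤ p * r * M / μ ∧
      (∃ B : ℝ, ∀ t ≥ (0:ℝ), E t ≤ B) := by
  set K := p * r * M / μ with hK
  have hμK : μ * K = p * r * M := by
    rw [hK]; field_simp
  have hKnn : 0 ≤ K := by positivity
  -- g t = (E t - K) * exp (μ t) is antitone on [0, ∞)
  set g : ℝ → ℝ := fun t => (E t - K) * Real.exp (μ * t) with hg
  have hgdiff : Differentiable ℝ g := by
    apply Differentiable.mul
    · exact hE.sub_const K
    · exact (Real.differentiable_exp.comp ((differentiable_id.const_mul μ)))
  have hgderiv : ∀ t, deriv g t = deriv E t * Real.exp (μ * t)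
      + (E t - K) * (μ * Real.exp (μ * t)) := by
    intro t
    have h1 : HasDerivAt (fun t => E t - K) (deriv E t) t :=
      ((hE t).hasDerivAt).sub_const K
    have h2 : HasDerivAt (fun t : ℝ => Real.exp (μ * t)) (μ * Real.exp (μ * t)) t := by
      have := (Real.hasDerivAt_exp (μ * t)).comp t ((hasDerivAt_id t).const_mul μ)
      simpa [mul_comm, Function.comp_def] using this
    have := (h1.mul h2)
    exact this.deriv
  have hganti : AntitoneOn g (Set.Ici (0:ℝ)) := by
    apply antitoneOn_of_deriv_nonpos (convex_Ici 0) hgdiff.continuous.continuousOn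
      hgdiff.differentiableOn
    intro t ht
    rw [interior_Ici] at ht
    have ht0 : (0:ℝ) ≤ t := le_of_lt ht
    rw [hgderiv, hE' t ht0]
    have hFt := hFbdd t ht0
    have h1 : p * r * F t ≤ μ * K := by
      rw [hμK]
      exact mul_le_mul_of_nonneg_left hFt.2 (by positivity)
    have hexp : 0 < Real.exp (μ * t) := Real.exp_pos _
    nlinarith [hexp]
  have hmain : ∀ t ≥ (0:ℝ), E t ≤ K + (E 0 - K) * Real.exp (-μ * t) := by
    intro t ht
    have := hganti (Set.self_mem_Ici) (Set.mem_Ici.2 ht) ht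
    have hgt : (E t - K) * Real.exp (μ * t) ≤ (E 0 - K) := by
      simpa [hg] using this
    have hexp : 0 < Real.exp (μ * t) := Real.exp_pos _
    have : E t - K ≤ (E 0 - K) * Real.exp (-μ * t) := by
      have key : E t - K = ((E t - K) * Real.exp (μ * t)) * Real.exp (-μ * t) := by
        rw [mul_assoc, ← Real.exp_add]; simp
      rw [key]
      exact mul_le_mul_of_nonneg_right hgt (Real.exp_pos _).le
    linarith
  refine ⟨hmain, ?_, ?_⟩
  · -- limsup bound
    have hE0nn : ∀ t ≥ (0:ℝ), 0 ≤ E t := by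
      -- h t = E t * exp (μ t) is monotone on [0, ∞)
      set h : ℝ → ℝ := fun t => E t * Real.exp (μ * t) with hh
      have hhdiff : Differentiable ℝ h :=
        hE.mul (Real.differentiable_exp.comp (differentiable_id.const_mul μ))
      have hmono : MonotoneOn h (Set.Ici (0:ℝ)) := by
        apply monotoneOn_of_deriv_nonneg (convex_Ici 0) hhdiff.continuous.continuousOn
          hhdiff.differentiableOn
        intro t ht
        rw [interior_Ici] at ht
        have ht0 : (0:ℝ) ≤ t := le_of_lt ht
        have h1 : HasDerivAt E (deriv E t) t := (hE t).hasDerivAt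
        have h2 : HasDerivAt (fun t : ℝ => Real.exp (μ * t)) (μ * Real.exp (μ * t)) t := by
          have := (Real.hasDerivAt_exp (μ * t)).comp t ((hasDerivAt_id t).const_mul μ)
          simpa [mul_comm, Function.comp_def] using this
        have hd : deriv h t = deriv E t * Real.exp (μ * t) + E t * (μ * Real.exp (μ * t)) := by
          exact (h1.mul h2).deriv
        rw [hd, hE' t ht0]
        have hFt := (hFbdd t ht0).1
        have hexp : 0 < Real.exp (μ * t) := Real.exp_pos _
        nlinarith [mul_nonneg (mul_nonneg (mul_nonneg hp0.le hr) hFt) hexp.le]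
      intro t ht
      have := hmono (Set.self_mem_Ici) (Set.mem_Ici.2 ht) ht
      have h0 : 0 ≤ E 0 * Real.exp (μ * 0) := by positivity
      have hexp : 0 < Real.exp (μ * t) := Real.exp_pos _
      have : 0 ≤ E t * Real.exp (μ * t) := le_trans (by simpa [hh] using h0) (by simpa [hh] using this)
      nlinarith [hexp, this]
    have htend : Tendsto (fun t => K + (E 0 - K) * Real.exp (-μ * t)) atTop (nhds K) := by
      have : Tendsto (fun t : ℝ => Real.exp (-μ * t)) atTop (nhds 0) := by
        apply Real.tendsto_exp_atBot.comp
        exact (tendsto_id.const_mul_atTop_of_neg (neg_neg_iff_pos.2 hμ)).comp tendsto_id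
      have h2 : Tendsto (fun t => (E 0 - K) * Real.exp (-μ * t)) atTop (nhds 0) := by
        simpa using this.const_mul (E 0 - K)
      have h3 := (tendsto_const_nhds (x := K) (f := atTop)).add h2
      simpa using h3
    have hle : E ≤ᶠ[atTop] fun t => K + (E 0 - K) * Real.exp (-μ * t) := by
      filter_upwards [eventually_ge_atTop (0:ℝ)] with t ht using hmain t ht
    have hcb : IsCoboundedUnder (· ≤ ·) atTop E := by
      apply isCoboundedUnder_le_of_eventually_le atTop (x := 0)
      filter_upwards [eventually_ge_atTop (0:ℝ)] with t ht using hE0nn t ht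
    calc limsup E atTop ≤ limsup (fun t => K + (E 0 - K) * Real.exp (-μ * t)) atTop :=
          limsup_le_limsup hle hcb htend.isBoundedUnder_le
      _ = K := htend.limsup_eq
  · refine ⟨K + |E 0 - K|, fun t ht => ?_⟩
    have h1 := hmain t ht
    have hexp1 : Real.exp (-μ * t) ≤ 1 := by
      apply Real.exp_le_one_iff.2
      nlinarith [mul_nonneg hμ.le ht]
    have hexp0 : 0 < Real.exp (-μ * t) := Real.exp_pos _
    have : (E 0 - K) * Real.exp (-μ * t) ≤ |E 0 - K| := by
      calc (E 0 - K) * Real.exp (-μ * t) ≤ |E 0 - K| * Real.exp (-μ * t) := by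
            exact mul_le_mul_of_nonneg_right (le_abs_self _) hexp0.le
        _ ≤ |E 0 - K| * 1 := by
            exact mul_le_mul_of_nonneg_left hexp1 (abs_nonneg _)
        _ = |E 0 - K| := mul_one _
    linarith
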